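/- Let λ = (λ₁, λ₂) be a partition with two parts and μ = (μ₁, …, μ_ℓ) a content vector with |μ| = |λ|. Define α = (α₁, …, α_{ℓ-1}) by αᵢ = μ_{i+1} + μ_{i+2} + ⋯ + μ_ℓ, and ν = (ν₁, …, ν_ℓ) by νᵢ = αᵢ + μᵢ for i ≤ ℓ−1 and ν_ℓ = μ_ℓ. Then the Kostka number K_{λμ} equals the Littlewood-Richardson coefficient c^ν_{λα}, realized as the number of LR skew tableaux of shape λ*α and content ν. -/

import Mathlib

open Finset

/-- The two-row Young diagram with row lengths `l1` (top) and `l2` (bottom).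
In intended uses `l2 ≤ l1`. -/
def twoRow (l1 l2 : ℕ) : YoungDiagram :=
  YoungDiagram.ofRowLens [max l1 l2, l2] (by
    simp [List.sortedGE_iff_pairwise, le_max_right])

/-- The number of cells of `T` with entry `v` (entries are 0-indexed). -/
def content {sh : YoungDiagram} (T : SemistandardYoungTableau sh) (v : ℕ) : ℕ :=
  (sh.cells.filter fun c => T c.1 c.2 = v).card

/-- Kostka number: the number of semistandard Young tableaux of shape `sh`
with content `c` (entries 0-indexed: `c v` copies of entry `v`). -/
noncomputable def kostka (sh : YoungDiagram) (c : ℕ → ℕ) : ℕ :=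
  Nat.card {T : SemistandardYoungTableau sh // ∀ v, content T v = c v}

/-- A skew semistandard tableau on the skew shape whose `i`-th row occupies
columns `[lo i, lo i + len i)`: rows weakly increase, columns strictly increase,
entries vanish off the shape. -/
structure SkewTab (lo len : ℕ → ℕ) where
  entry : ℕ → ℕ → ℕ
  rowWeak : ∀ i j1 j2, lo i ≤ j1 → j1 ≤ j2 → j2 < lo i + len i → entry i j1 ≤ entry i j2
  colStrict : ∀ i j, lo i ≤ j → j < lo i + len i → lo (i + 1) ≤ j →
    j < lo (i + 1) + len (i + 1) → entry i j < entry (i + 1) j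
  zeros : ∀ i j, ¬(lo i ≤ j ∧ j < lo i + len i) → entry i j = 0

/-- The reading word: each row read right to left, rows top to bottom. -/
def readWord (lo len : ℕ → ℕ) (rows : ℕ) (T : SkewTab lo len) : List ℕ :=
  (List.range rows).flatMap fun i =>
    (List.range (len i)).reverse.map fun t => T.entry i (lo i + t)

/-- A word is a lattice word: every prefix has at least as many `v`'s as `(v+1)`'s. -/
def IsLattice (w : List ℕ) : Prop := ∀ n v, (w.take n).count (v + 1) ≤ (w.take n).count v

/-- Number of copies of `v` in row `i` of the skew tableau `T`. -/
def rowContent (lo len : ℕ → ℕ) (T : SkewTab lo len) (i v : ℕ) : ℕ :=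
  ((Finset.Ico (lo i) (lo i + len i)).filter fun j => T.entry i j = v).card

/-- Total number of copies of `v` in the skew tableau `T` (with `rows` rows). -/
def skewContent (lo len : ℕ → ℕ) (rows : ℕ) (T : SkewTab lo len) (v : ℕ) : ℕ :=
  ∑ i ∈ Finset.range rows, rowContent lo len T i v

/-- Left endpoints of the rows of the skew shape `λ*α` where `λ = (l1, l2)` and
`α` has `m` rows: the `m` rows of `α` start at column `l1`, the two rows of `λ` at column 0. -/
def starLo (l1 m : ℕ) (i : ℕ) : ℕ := if i < m then l1 else 0

/-- Row lengths of the skew shape `λ*α`, `λ = (l1, l2)`, `α` with `m` rows. -/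
def starLen (l1 l2 : ℕ) (a : ℕ → ℕ) (m : ℕ) (i : ℕ) : ℕ :=
  if i < m then a i else if i = m then l1 else if i = m + 1 then l2 else 0

namespace Stmt7Aux


/-- count of `u` in the block word `0^{c 0} 1^{c 1} ⋯ (m-1)^{c (m-1)}`. -/
lemma countA (c : ℕ → ℕ) (m u : ℕ) :
    (((List.range m).flatMap fun i => List.replicate (c i) i).count u)
      = if u < m then c u else 0 := by
  induction m with
  | zero => simp
  | succ m ih =>
    rw [List.range_succ, List.flatMap_append]
    simp only [List.flatMap_cons, List.flatMap_nil, List.append_nil, List.count_append, ih,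
      List.count_replicate, beq_iff_eq]
    rcases lt_trichotomy u m with h | h | h
    · rw [if_pos h, if_pos (by omega : u < m + 1), if_neg (by omega : ¬ m = u), Nat.add_zero]
    · subst h; simp
    · rw [if_neg (by omega : ¬ u < m), if_neg (by omega : ¬ m = u),
        if_neg (by omega : ¬ u < m + 1)]

/-- lattice property for prefixes of the block word, for antitone `c`. -/
lemma latticeA (c : ℕ → ℕ) (hc : ∀ i j, i ≤ j → c j ≤ c i) (m : ℕ) :
    ∀ n v, (((List.range m).flatMap fun i => List.replicate (c i) i).take n).count (v+1)
      ≤ (((List.range m).flatMap fun i => List.replicate (c i) i).take n).count v := by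
  induction m with
  | zero => simp
  | succ m ih =>
    intro n v
    rw [List.range_succ, List.flatMap_append]
    simp only [List.flatMap_cons, List.flatMap_nil, List.append_nil,
      List.take_append, List.count_append, List.take_replicate,
      List.count_replicate, beq_iff_eq]
    set A := (List.range m).flatMap fun i => List.replicate (c i) i with hA
    set k := n - A.length with hk
    rcases lt_trichotomy (v+1) m with h | h | h
    · have e1 : m ≠ v + 1 := by omega
      have e2 : m ≠ v := by omega
      simp only [if_neg e1, if_neg e2]
      simpa using ih n v
    · -- v + 1 = m
      subst h
      have h1 : (A.take n).count (v+1) ≤ A.count (v+1) := (List.take_sublist _ _).count_le _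
      have h2 : A.count (v+1) = 0 := by rw [hA, countA]; simp
      have e2 : v + 1 ≠ v := by omega
      simp only [if_pos rfl, if_neg e2, if_true]
      rcases Nat.eq_zero_or_pos (min k (c (v+1))) with h0 | h0
      · omega
      · have hkpos : A.length ≤ n := by
          rcases Nat.lt_or_ge n A.length with hcon | hok
          · exfalso; have : k = 0 := by omega
            omega
          · exact hok
        have htake : A.take n = A := List.take_of_length_le hkpos
        have hle : min k (c (v+1)) ≤ c v := le_trans (min_le_right _ _) (hc v (v+1) (by omega))
        have hAv : A.count v = c v := by rw [hA, countA]; simp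
        rw [htake]
        omega
    · have e1 : m ≠ v + 1 := by omega
      rcases eq_or_ne m v with hv | hv
      · have h2 : (A.take n).count (v+1) ≤ A.count (v+1) := (List.take_sublist _ _).count_le _
        have h3 : A.count (v+1) = 0 := by rw [hA, countA]; simp [show ¬ v + 1 < m by omega]
        simp only [if_neg e1, if_pos hv]
        omega
      · simp only [if_neg e1, if_neg hv]
        simpa using ih n v



lemma mem_twoRow {l1 l2 : ℕ} (hl : l2 ≤ l1) (i j : ℕ) :
    ((i, j) ∈ twoRow l1 l2) ↔ (i = 0 ∧ j < l1) ∨ (i = 1 ∧ j < l2) := by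
  rw [twoRow, YoungDiagram.mem_ofRowLens]
  constructor
  · rintro ⟨h, h2⟩
    simp only [List.length_cons, List.length_nil] at h
    interval_cases i
    · left; exact ⟨rfl, by simpa [max_eq_left hl] using h2⟩
    · right; exact ⟨rfl, by simpa using h2⟩
  · rintro (⟨rfl, hj⟩ | ⟨rfl, hj⟩)
    · exact ⟨by simp, by simpa [max_eq_left hl] using hj⟩
    · exact ⟨by simp, by simpa using hj⟩

lemma countRow (g : ℕ → ℕ) (k v : ℕ) :
    ((List.range k).reverse.map g).count v
      = ((Finset.range k).filter fun t => g t = v).card := by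
  induction k with
  | zero => simp
  | succ k ih =>
    rw [List.range_succ, show ((List.range k) ++ [k]).reverse = k :: (List.range k).reverse by simp,
      Finset.range_add_one, Finset.filter_insert]
    simp only [List.map_cons, List.count_cons, beq_iff_eq, ih]
    split_ifs with h
    · rw [Finset.card_insert_of_notMem (by simp)]
    · simp [h]

lemma rowword_eq_replicate (g : ℕ → ℕ) (k x : ℕ) (h : ∀ t, t < k → g t = x) :
    ((List.range k).reverse.map g) = List.replicate k x := by
  rw [List.eq_replicate_iff]
  refine ⟨by simp, ?_⟩
  intro b hb
  simp only [List.mem_map, List.mem_reverse, List.mem_range] at hb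
  obtain ⟨t, ht, rfl⟩ := hb
  exact h t ht

def emb (r : ℕ) : ℕ ↪ ℕ × ℕ := ⟨fun j => (r, j), fun a b h => by cases h; rfl⟩

lemma filter_cells_twoRow {l1 l2 : ℕ} (hl : l2 ≤ l1) (p : ℕ × ℕ → Prop) [DecidablePred p] :
    ((twoRow l1 l2).cells.filter p).card
      = ((Finset.range l1).filter fun j => p (0, j)).card
        + ((Finset.range l2).filter fun j => p (1, j)).card := by
  have hset : (twoRow l1 l2).cells.filter p
      = (((Finset.range l1).filter fun j => p (0, j)).map (emb 0))
        ∪ (((Finset.range l2).filter fun j => p (1, j)).map (emb 1)) := by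
    ext ⟨i, j⟩
    simp only [Finset.mem_filter, YoungDiagram.mem_cells, Finset.mem_union, Finset.mem_map,
      Finset.mem_range, emb, Function.Embedding.coeFn_mk]
    constructor
    · rintro ⟨hm, hp⟩
      rcases (mem_twoRow hl i j).1 hm with ⟨rfl, hj⟩ | ⟨rfl, hj⟩
      · exact Or.inl ⟨j, ⟨hj, hp⟩, rfl⟩
      · exact Or.inr ⟨j, ⟨hj, hp⟩, rfl⟩
    · rintro (⟨t, ⟨ht, hp⟩, heq⟩ | ⟨t, ⟨ht, hp⟩, heq⟩) <;>
        · cases heq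
          refine ⟨(mem_twoRow hl _ _).2 ?_, hp⟩
          first
            | exact Or.inl ⟨rfl, ht⟩
            | exact Or.inr ⟨rfl, ht⟩
  rw [hset, Finset.card_union_of_disjoint, Finset.card_map, Finset.card_map]
  rw [Finset.disjoint_left]
  rintro ⟨i, j⟩ ha hb
  simp only [Finset.mem_map, emb, Function.Embedding.coeFn_mk, Prod.mk.injEq] at ha hb
  obtain ⟨_, _, rfl, _⟩ := ha
  obtain ⟨_, _, h1, _⟩ := hb

end Stmt7Aux
namespace Stmt7Aux

def aF (L : ℕ) (mu : ℕ → ℕ) (i : ℕ) : ℕ := ∑ w ∈ Finset.Ico (i + 1) L, mu w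

lemma aF_anti (L : ℕ) (mu : ℕ → ℕ) {i j : ℕ} (h : i ≤ j) : aF L mu j ≤ aF L mu i :=
  Finset.sum_le_sum_of_subset (Finset.Ico_subset_Ico (by omega) le_rfl)

lemma aF_eq_zero {L : ℕ} (mu : ℕ → ℕ) {v : ℕ} (h : L - 1 ≤ v) : aF L mu v = 0 := by
  unfold aF; rw [Finset.Ico_eq_empty (by omega)]; simp

lemma aF_succ {L : ℕ} {mu : ℕ → ℕ} (hmu : ∀ i, L ≤ i → mu i = 0) (v : ℕ) :
    aF L mu v = mu (v + 1) + aF L mu (v + 1) := by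
  unfold aF
  rcases Nat.lt_or_ge (v + 1) L with h | h
  · rw [Finset.sum_eq_sum_Ico_succ_bot h]
  · rw [Finset.Ico_eq_empty (by omega), Finset.Ico_eq_empty (by omega), hmu _ h]; simp

lemma nu_eq {L : ℕ} {mu : ℕ → ℕ} (hmu : ∀ i, L ≤ i → mu i = 0) (v : ℕ) :
    (∑ w ∈ Finset.Ico v L, mu w) = mu v + aF L mu v := by
  unfold aF
  rcases Nat.lt_or_ge v L with h | h
  · rw [Finset.sum_eq_sum_Ico_succ_bot h]
  · rw [Finset.Ico_eq_empty (by omega), Finset.Ico_eq_empty (by omega), hmu _ h]; simp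

variable {l1 l2 L : ℕ} {mu : ℕ → ℕ}

/-- forward construction: SSYT to skew LR tableau -/
def fwd (hl : l2 ≤ l1) (T : SemistandardYoungTableau (twoRow l1 l2)) :
    SkewTab (starLo l1 (L - 1)) (starLen l1 l2 (aF L mu) (L - 1)) where
  entry i j := if i < L - 1 then (if l1 ≤ j ∧ j < l1 + aF L mu i then i else 0)
               else T (i - (L - 1)) j
  rowWeak := by
    intro i j1 j2 h1 h2 h3
    by_cases hi : i < L - 1
    · simp only [starLo, starLen, if_pos hi] at h1 h3 ⊢
      rw [if_pos ⟨h1, by omega⟩, if_pos ⟨by omega, h3⟩]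
    · simp only [starLo, starLen, if_neg hi] at h1 h3 ⊢
      rcases eq_or_lt_of_le h2 with rfl | hlt
      · exact le_refl _
      · by_cases hm : i = L - 1
        · rw [if_pos hm] at h3
          exact T.row_weak hlt ((mem_twoRow hl _ _).2
            (Or.inl ⟨by omega, by omega⟩))
        · by_cases hm1 : i = (L - 1) + 1
          · rw [if_neg hm, if_pos hm1] at h3
            exact T.row_weak hlt ((mem_twoRow hl _ _).2
              (Or.inr ⟨by omega, by omega⟩))
          · rw [if_neg hm, if_neg hm1] at h3; omega
  colStrict := by
    intro i j hj1 hj2 hj3 hj4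
    by_cases h1 : i + 1 < L - 1
    · have hi : i < L - 1 := by omega
      simp only [starLo, starLen, if_pos hi, if_pos h1] at hj1 hj2 hj3 hj4 ⊢
      rw [if_pos ⟨hj1, hj2⟩, if_pos ⟨hj3, hj4⟩]
      omega
    · by_cases h2 : i < L - 1
      · exfalso
        have hi1 : i + 1 = L - 1 := by omega
        simp only [starLo, starLen, if_pos h2, if_neg h1, if_pos hi1] at hj1 hj3 hj4
        omega
      · by_cases h3 : i = L - 1
        · have hi1 : ¬ (i + 1 = L - 1) := by omega
          have hi2 : i + 1 = (L - 1) + 1 := by omega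
          simp only [starLo, starLen, if_neg h1, if_neg hi1, if_pos hi2,
            if_neg (show ¬ i + 1 < L - 1 from h1)] at hj4
          simp only [if_neg h2, if_neg (show ¬ i + 1 < L - 1 from h1)]
          have hmem : ((1 : ℕ), j) ∈ twoRow l1 l2 :=
            (mem_twoRow hl 1 j).2 (Or.inr ⟨rfl, by omega⟩)
          have := T.col_strict (show (0:ℕ) < 1 by omega) hmem
          rwa [show i - (L - 1) = 0 by omega, show i + 1 - (L - 1) = 1 by omega]
        · exfalso
          have hlen : starLen l1 l2 (aF L mu) (L - 1) (i + 1) = 0 := by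
            simp only [starLen, if_neg h1, if_neg (show ¬ i + 1 = L - 1 by omega),
              if_neg (show ¬ i + 1 = (L - 1) + 1 by omega)]
          omega
  zeros := by
    intro i j h
    by_cases hi : i < L - 1
    · simp only [starLo, starLen, if_pos hi] at h ⊢
      rw [if_neg h]
    · simp only [starLo, starLen, if_neg hi] at h ⊢
      apply T.zeros
      rw [mem_twoRow hl]
      by_cases h3 : i = L - 1
      · rw [if_pos h3] at h; omega
      · rw [if_neg h3] at h
        by_cases h4 : i = (L - 1) + 1
        · rw [if_pos h4] at h; omega
        · rw [if_neg h4] at h; omega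

/-- a helper: flatMap over range with pointwise-equal functions -/
lemma flatMap_range_congr {f g : ℕ → List ℕ} (m : ℕ) (h : ∀ i, i < m → f i = g i) :
    (List.range m).flatMap f = (List.range m).flatMap g := by
  rw [List.flatMap_def, List.flatMap_def, List.map_congr_left]
  intro a ha; exact h a (List.mem_range.mp ha)

lemma fwd_word (hl : l2 ≤ l1) (hL : 1 ≤ L) (T : SemistandardYoungTableau (twoRow l1 l2)) :
    readWord (starLo l1 (L - 1)) (starLen l1 l2 (aF L mu) (L - 1)) (L + 1) (fwd hl T)
      = (((List.range (L - 1)).flatMap fun i => List.replicate (aF L mu i) i)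
        ++ ((List.range l1).reverse.map fun t => T 0 t))
        ++ ((List.range l2).reverse.map fun t => T 1 t) := by
  unfold readWord
  rw [show L + 1 = ((L - 1) + 1) + 1 by omega, List.range_succ, List.range_succ,
    List.flatMap_append, List.flatMap_append]
  congr 1
  · congr 1
    · apply flatMap_range_congr
      intro i hi
      simp only [starLo, starLen, if_pos hi]
      apply rowword_eq_replicate
      intro t ht
      simp only [fwd, if_pos hi]
      rw [if_pos ⟨by omega, by omega⟩]
    · simp only [List.flatMap_cons, List.flatMap_nil, List.append_nil, starLo, starLen,
        if_neg (lt_irrefl (L - 1)), if_pos rfl, if_true]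
      apply List.map_congr_left
      intro t _
      simp only [fwd, if_neg (lt_irrefl (L - 1))]
      rw [show L - 1 - (L - 1) = 0 by omega, Nat.zero_add]
  · simp only [List.flatMap_cons, List.flatMap_nil, List.append_nil, starLo, starLen,
      if_neg (show ¬ (L - 1) + 1 < L - 1 by omega), if_neg (show ¬ (L - 1) + 1 = L - 1 by omega),
      if_pos rfl, if_true]
    apply List.map_congr_left
    intro t _
    simp only [fwd, if_neg (show ¬ (L - 1) + 1 < L - 1 by omega)]
    rw [show (L - 1) + 1 - (L - 1) = 1 by omega, Nat.zero_add]

lemma content_eq (hl : l2 ≤ l1) (T : SemistandardYoungTableau (twoRow l1 l2)) (v : ℕ) :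
    content T v = ((Finset.range l1).filter fun j => T 0 j = v).card
      + ((Finset.range l2).filter fun j => T 1 j = v).card := by
  unfold content
  exact filter_cells_twoRow hl _

lemma fwd_content (hl : l2 ≤ l1) (hL : 1 ≤ L) (hmu : ∀ i, L ≤ i → mu i = 0)
    (T : SemistandardYoungTableau (twoRow l1 l2)) (hT : ∀ v, content T v = mu v) (v : ℕ) :
    skewContent (starLo l1 (L - 1)) (starLen l1 l2 (aF L mu) (L - 1)) (L + 1) (fwd hl T) v
      = ∑ w ∈ Finset.Ico v L, mu w := by
  unfold skewContent
  rw [show L + 1 = ((L - 1) + 1) + 1 by omega, Finset.sum_range_succ, Finset.sum_range_succ]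
  have h1 : ∑ i ∈ Finset.range (L - 1),
      rowContent (starLo l1 (L - 1)) (starLen l1 l2 (aF L mu) (L - 1)) (fwd hl T) i v
      = aF L mu v := by
    have : ∀ i ∈ Finset.range (L - 1),
        rowContent (starLo l1 (L - 1)) (starLen l1 l2 (aF L mu) (L - 1)) (fwd hl T) i v
        = if v = i then aF L mu i else 0 := by
      intro i hi
      rw [Finset.mem_range] at hi
      unfold rowContent
      simp only [starLo, starLen, if_pos hi]
      have hent : ∀ j ∈ Finset.Ico l1 (l1 + aF L mu i), (fwd (L := L) (mu := mu) hl T).entry i j = i := by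
        intro j hj
        rw [Finset.mem_Ico] at hj
        simp only [fwd, if_pos hi]
        rw [if_pos ⟨hj.1, hj.2⟩]
      rcases eq_or_ne v i with rfl | hv
      · rw [if_pos rfl, Finset.filter_true_of_mem hent, Nat.card_Ico]
        omega
      · rw [if_neg hv, Finset.card_eq_zero, Finset.filter_false_of_mem]
        intro j hj
        rw [hent j hj]
        omega
    rw [Finset.sum_congr rfl this, Finset.sum_ite_eq]
    rcases Nat.lt_or_ge v (L - 1) with h | h
    · rw [if_pos (Finset.mem_range.mpr h)]
    · rw [if_neg (by simp; omega), aF_eq_zero mu h]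
  have h2 : rowContent (starLo l1 (L - 1)) (starLen l1 l2 (aF L mu) (L - 1)) (fwd hl T) (L - 1) v
      = ((Finset.range l1).filter fun j => T 0 j = v).card := by
    unfold rowContent
    simp only [starLo, starLen, if_neg (lt_irrefl (L - 1)), if_pos rfl, Nat.zero_add]
    rw [← Finset.range_eq_Ico]
    congr 1
    apply Finset.filter_congr
    intro j hj
    simp only [fwd, if_neg (lt_irrefl (L - 1))]
    rw [show L - 1 - (L - 1) = 0 by omega]
  have h3 : rowContent (starLo l1 (L - 1)) (starLen l1 l2 (aF L mu) (L - 1)) (fwd hl T) ((L-1)+1) v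
      = ((Finset.range l2).filter fun j => T 1 j = v).card := by
    unfold rowContent
    simp only [starLo, starLen, if_neg (show ¬ (L - 1) + 1 < L - 1 by omega),
      if_neg (show ¬ (L - 1) + 1 = L - 1 by omega), if_pos rfl, Nat.zero_add]
    rw [← Finset.range_eq_Ico]
    congr 1
    apply Finset.filter_congr
    intro j hj
    simp only [fwd, if_neg (show ¬ (L - 1) + 1 < L - 1 by omega)]
    rw [show (L - 1) + 1 - (L - 1) = 1 by omega]
  rw [h1, h2, h3, nu_eq hmu]
  have := hT v
  rw [content_eq hl] at this
  omega

lemma count_T_word (hl : l2 ≤ l1) (T : SemistandardYoungTableau (twoRow l1 l2)) (u : ℕ) :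
    ((((List.range l1).reverse.map fun t => T 0 t)
        ++ ((List.range l2).reverse.map fun t => T 1 t)).count u) = content T u := by
  rw [List.count_append, countRow, countRow, content_eq hl]

lemma fwd_lattice (hl : l2 ≤ l1) (hL : 1 ≤ L) (hmu : ∀ i, L ≤ i → mu i = 0)
    (T : SemistandardYoungTableau (twoRow l1 l2)) (hT : ∀ v, content T v = mu v) :
    IsLattice (readWord (starLo l1 (L - 1)) (starLen l1 l2 (aF L mu) (L - 1)) (L + 1)
      (fwd hl T)) := by
  intro n v
  rw [fwd_word hl hL, List.append_assoc]
  set A := (List.range (L - 1)).flatMap fun i => List.replicate (aF L mu i) i with hA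
  set B := (((List.range l1).reverse.map fun t => T 0 t)
      ++ ((List.range l2).reverse.map fun t => T 1 t)) with hB
  rw [List.take_append, List.count_append, List.count_append]
  rcases Nat.lt_or_ge n A.length with h | h
  · rw [Nat.sub_eq_zero_of_le (le_of_lt h)]
    simpa using latticeA (aF L mu) (fun i j hij => aF_anti L mu hij) (L - 1) n v
  · rw [List.take_of_length_le h]
    have hAv1 : A.count (v + 1) = aF L mu (v + 1) := by
      rw [hA, countA]
      rcases Nat.lt_or_ge (v + 1) (L - 1) with h' | h'
      · rw [if_pos h']
      · rw [if_neg (by omega), aF_eq_zero mu h']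
    have hAv : A.count v = aF L mu v := by
      rw [hA, countA]
      rcases Nat.lt_or_ge v (L - 1) with h' | h'
      · rw [if_pos h']
      · rw [if_neg (by omega), aF_eq_zero mu h']
    have hBv1 : ((B.take (n - A.length)).count (v + 1)) ≤ mu (v + 1) := by
      calc ((B.take (n - A.length)).count (v + 1)) ≤ B.count (v + 1) :=
            (List.take_sublist _ _).count_le _
        _ = mu (v + 1) := by rw [hB, count_T_word hl, hT]
    have := aF_succ hmu v
    omega
lemma bwd_ge (S : SkewTab (starLo l1 (L - 1)) (starLen l1 l2 (aF L mu) (L - 1))) :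
    ∀ i, i < L - 1 → ∀ j, l1 ≤ j → j < l1 + aF L mu i → i ≤ S.entry i j := by
  intro i
  induction i with
  | zero => intro _ j _ _; exact Nat.zero_le _
  | succ i ih =>
    intro hi j hj1 hj2
    have hii : i < L - 1 := by omega
    have haf : aF L mu (i + 1) ≤ aF L mu i := aF_anti L mu (by omega)
    have hcs := S.colStrict i j
      (by simp only [starLo, if_pos hii]; exact hj1)
      (by simp only [starLo, starLen, if_pos hii]; omega)
      (by simp only [starLo, if_pos hi]; exact hj1)
      (by simp only [starLo, starLen, if_pos hi]; omega)
    have := ih hii j hj1 (by omega)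
    omega

lemma bwd_const (hL : 1 ≤ L) (S : SkewTab (starLo l1 (L - 1)) (starLen l1 l2 (aF L mu) (L - 1)))
    (hlat : IsLattice (readWord (starLo l1 (L - 1)) (starLen l1 l2 (aF L mu) (L - 1)) (L + 1) S)) :
    ∀ i, i < L - 1 → ∀ j, l1 ≤ j → j < l1 + aF L mu i → S.entry i j = i := by
  intro i
  induction i using Nat.strong_induction_on with
  | _ i IH =>
  intro hi j hj1 hj2
  have hk : 0 < aF L mu i := by omega
  obtain ⟨k, hk'⟩ : ∃ k, aF L mu i = k + 1 := ⟨aF L mu i - 1, by omega⟩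
  have hmax : S.entry i j ≤ S.entry i (l1 + k) := S.rowWeak i j (l1 + k)
    (by simp only [starLo, if_pos hi]; exact hj1)
    (by omega)
    (by simp only [starLo, starLen, if_pos hi]; omega)
  have hge : i ≤ S.entry i j := bwd_ge S i hi j hj1 hj2
  have hge0 : i ≤ S.entry i (l1 + k) := bwd_ge S i hi (l1 + k) (by omega) (by omega)
  set w := S.entry i (l1 + k) with hw
  rcases Nat.lt_or_ge i w with hlt | hle
  · exfalso
    set f : ℕ → List ℕ := fun r => (List.range (starLen l1 l2 (aF L mu) (L - 1) r)).reverse.map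
        fun t => S.entry r (starLo l1 (L - 1) r + t) with hf
    have hW : ∃ tail, readWord (starLo l1 (L - 1)) (starLen l1 l2 (aF L mu) (L - 1)) (L + 1) S
        = ((List.range i).flatMap fun r => List.replicate (aF L mu r) r) ++ (w :: tail) := by
      unfold readWord
      rw [show L + 1 = i + ((L - i) + 1) by omega, List.range_add, List.range_succ_eq_map,
        List.map_cons, List.flatMap_append, List.flatMap_cons]
      have hfr : (List.range i).flatMap f
          = (List.range i).flatMap fun r => List.replicate (aF L mu r) r := by
        apply flatMap_range_congr
        intro r hr
        have hrL : r < L - 1 := by omega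
        simp only [hf, starLo, starLen, if_pos hrL]
        apply rowword_eq_replicate
        intro t ht
        exact IH r hr hrL (l1 + t) (by omega) (by omega)
      have hfi : (List.map (fun t => S.entry (i + 0) (starLo l1 (L - 1) (i + 0) + t))
            (List.range (starLen l1 l2 (aF L mu) (L - 1) (i + 0))).reverse)
          = w :: ((List.range k).reverse.map fun t => S.entry i (l1 + t)) := by
        simp only [Nat.add_zero, starLo, starLen, if_pos hi]
        rw [hk', List.range_succ, show ((List.range k) ++ [k]).reverse
          = k :: (List.range k).reverse by simp, List.map_cons]
      rw [hfr, hfi, List.cons_append]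
      exact ⟨_, rfl⟩
    obtain ⟨tail, hWeq⟩ := hW
    set Ai := (List.range i).flatMap fun r => List.replicate (aF L mu r) r with hAi
    have hlt' := hlat (Ai.length + 1) (w - 1)
    rw [hWeq, show Ai.length + 1 = Ai.length + 1 from rfl,
      List.take_length_add_append, show List.take 1 (w :: tail) = [w] by simp] at hlt'
    rw [show w - 1 + 1 = w by omega] at hlt'
    rw [List.count_append, List.count_append, hAi, countA, countA,
      if_neg (show ¬ w < i by omega), if_neg (show ¬ w - 1 < i by omega)] at hlt'
    simp only [List.count_singleton, beq_iff_eq, if_pos rfl,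
      if_neg (show ¬ (w = w - 1) by omega)] at hlt'
    simp at hlt'
  · omega

/-- backward construction : skew LR tableau to SSYT -/
def bwd (hl : l2 ≤ l1)
    (S : SkewTab (starLo l1 (L - 1)) (starLen l1 l2 (aF L mu) (L - 1))) :
    SemistandardYoungTableau (twoRow l1 l2) where
  entry r j := if r = 0 then S.entry (L - 1) j else if r = 1 then S.entry ((L - 1) + 1) j else 0
  row_weak' := by
    intro i j1 j2 hj hm
    rcases (mem_twoRow hl _ _).1 hm with ⟨rfl, hj2⟩ | ⟨rfl, hj2⟩
    · simp only [if_pos rfl, if_true]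
      exact S.rowWeak (L - 1) j1 j2
        (by simp only [starLo, if_neg (lt_irrefl (L - 1))]; omega)
        (le_of_lt hj)
        (by simp only [starLo, starLen, if_neg (lt_irrefl (L - 1)), if_pos rfl, if_true]; omega)
    · simp only [if_neg one_ne_zero, if_pos rfl, if_true]
      exact S.rowWeak ((L - 1) + 1) j1 j2
        (by simp only [starLo, if_neg (show ¬ (L - 1) + 1 < L - 1 by omega)]; omega)
        (le_of_lt hj)
        (by simp only [starLo, starLen, if_neg (show ¬ (L - 1) + 1 < L - 1 by omega),
          if_neg (show ¬ (L - 1) + 1 = L - 1 by omega), if_pos rfl, if_true]; omega)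
  col_strict' := by
    intro i1 i2 j hi hm
    rcases (mem_twoRow hl _ _).1 hm with ⟨rfl, hj2⟩ | ⟨rfl, hj2⟩
    · omega
    · have hi1 : i1 = 0 := by omega
      subst hi1
      simp only [if_pos rfl, if_neg one_ne_zero]
      exact S.colStrict (L - 1) j
        (by simp only [starLo, if_neg (lt_irrefl (L - 1))]; omega)
        (by simp only [starLo, starLen, if_neg (lt_irrefl (L - 1)), if_pos rfl, if_true]; omega)
        (by simp only [starLo, if_neg (show ¬ (L - 1) + 1 < L - 1 by omega)]; omega)
        (by simp only [starLo, starLen, if_neg (show ¬ (L - 1) + 1 < L - 1 by omega),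
          if_neg (show ¬ (L - 1) + 1 = L - 1 by omega), if_pos rfl, if_true]; omega)
  zeros' := by
    intro i j hm
    rw [mem_twoRow hl] at hm
    push_neg at hm
    by_cases h0 : i = 0
    · subst h0
      simp only [if_pos rfl, if_true]
      apply S.zeros
      simp only [starLo, starLen, if_neg (lt_irrefl (L - 1)), if_pos rfl, if_true]
      have := hm.1 rfl
      omega
    · by_cases h1 : i = 1
      · subst h1
        simp only [if_neg one_ne_zero, if_pos rfl, if_true]
        apply S.zeros
        simp only [starLo, starLen, if_neg (show ¬ (L - 1) + 1 < L - 1 by omega),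
          if_neg (show ¬ (L - 1) + 1 = L - 1 by omega), if_pos rfl, if_true]
        have := hm.2 rfl
        omega
      · simp only [if_neg h0, if_neg h1]
lemma bwd_apply (hl : l2 ≤ l1) (S : SkewTab (starLo l1 (L - 1)) (starLen l1 l2 (aF L mu) (L - 1)))
    (r j : ℕ) :
    (bwd hl S) r j = if r = 0 then S.entry (L - 1) j
      else if r = 1 then S.entry ((L - 1) + 1) j else 0 := rfl

lemma alpha_rows_sum (S : SkewTab (starLo l1 (L - 1)) (starLen l1 l2 (aF L mu) (L - 1)))
    (hconst : ∀ i, i < L - 1 → ∀ j, l1 ≤ j → j < l1 + aF L mu i → S.entry i j = i) (v : ℕ) :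
    ∑ i ∈ Finset.range (L - 1),
      rowContent (starLo l1 (L - 1)) (starLen l1 l2 (aF L mu) (L - 1)) S i v = aF L mu v := by
  have hrc : ∀ i ∈ Finset.range (L - 1),
      rowContent (starLo l1 (L - 1)) (starLen l1 l2 (aF L mu) (L - 1)) S i v
      = if v = i then aF L mu i else 0 := by
    intro i hi
    rw [Finset.mem_range] at hi
    unfold rowContent
    simp only [starLo, starLen, if_pos hi]
    rcases eq_or_ne v i with rfl | hv
    · rw [if_pos rfl, Finset.filter_true_of_mem, Nat.card_Ico]
      · omega
      · intro j hj; rw [Finset.mem_Ico] at hj; exact hconst _ hi j hj.1 hj.2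
    · rw [if_neg hv, Finset.card_eq_zero, Finset.filter_false_of_mem]
      intro j hj
      rw [Finset.mem_Ico] at hj
      rw [hconst _ hi j hj.1 hj.2]
      omega
  rw [Finset.sum_congr rfl hrc, Finset.sum_ite_eq]
  rcases Nat.lt_or_ge v (L - 1) with h | h
  · rw [if_pos (Finset.mem_range.mpr h)]
  · rw [if_neg (by simp; omega), aF_eq_zero mu h]

lemma row_m_content (S : SkewTab (starLo l1 (L - 1)) (starLen l1 l2 (aF L mu) (L - 1))) (v : ℕ) :
    rowContent (starLo l1 (L - 1)) (starLen l1 l2 (aF L mu) (L - 1)) S (L - 1) v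
      = ((Finset.range l1).filter fun j => S.entry (L - 1) j = v).card := by
  unfold rowContent
  simp only [starLo, starLen, if_neg (lt_irrefl (L - 1)), if_pos rfl, if_true, Nat.zero_add]
  rw [← Finset.range_eq_Ico]

lemma row_m1_content (S : SkewTab (starLo l1 (L - 1)) (starLen l1 l2 (aF L mu) (L - 1))) (v : ℕ) :
    rowContent (starLo l1 (L - 1)) (starLen l1 l2 (aF L mu) (L - 1)) S ((L - 1) + 1) v
      = ((Finset.range l2).filter fun j => S.entry ((L - 1) + 1) j = v).card := by
  unfold rowContent
  simp only [starLo, starLen, if_neg (show ¬ (L - 1) + 1 < L - 1 by omega),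
    if_neg (show ¬ (L - 1) + 1 = L - 1 by omega), if_pos rfl, if_true, Nat.zero_add]
  rw [← Finset.range_eq_Ico]

lemma bwd_content (hl : l2 ≤ l1) (hL : 1 ≤ L) (hmu : ∀ i, L ≤ i → mu i = 0)
    (S : SkewTab (starLo l1 (L - 1)) (starLen l1 l2 (aF L mu) (L - 1)))
    (hlat : IsLattice (readWord (starLo l1 (L - 1)) (starLen l1 l2 (aF L mu) (L - 1)) (L + 1) S))
    (hcont : ∀ v, skewContent (starLo l1 (L - 1)) (starLen l1 l2 (aF L mu) (L - 1)) (L + 1) S v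
      = ∑ w ∈ Finset.Ico v L, mu w) (v : ℕ) :
    content (bwd hl S) v = mu v := by
  have hs := hcont v
  unfold skewContent at hs
  rw [show L + 1 = ((L - 1) + 1) + 1 by omega, Finset.sum_range_succ, Finset.sum_range_succ,
    alpha_rows_sum S (bwd_const hL S hlat) v, row_m_content, row_m1_content, nu_eq hmu] at hs
  rw [content_eq hl]
  have e0 : ((Finset.range l1).filter fun j => (bwd (L := L) (mu := mu) hl S) 0 j = v)
      = ((Finset.range l1).filter fun j => S.entry (L - 1) j = v) := by
    apply Finset.filter_congr
    intro j _
    rw [bwd_apply, if_pos rfl]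
  have e1 : ((Finset.range l2).filter fun j => (bwd (L := L) (mu := mu) hl S) 1 j = v)
      = ((Finset.range l2).filter fun j => S.entry ((L - 1) + 1) j = v) := by
    apply Finset.filter_congr
    intro j _
    rw [bwd_apply, if_neg one_ne_zero, if_pos rfl]
  rw [e0, e1]
  omega

lemma skewtab_ext {lo len : ℕ → ℕ} {S1 S2 : SkewTab lo len} (h : S1.entry = S2.entry) :
    S1 = S2 := by
  cases S1; cases S2; cases h; rfl

end Stmt7Aux

open Stmt7Aux

/-- With `λ = (l1, l2)`, content `μ` supported on `{0, …, L-1}`,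
`α i = Σ_{j > i} μ j` and `ν i = α i + μ i` (`ν` at the last index is `μ` there;
here `ν i = Σ_{j ≥ i} μ j`), the Kostka number `K_{λμ}` equals the number of LR skew
tableaux of shape `λ*α` and content `ν`, i.e. the LR coefficient `c^ν_{λα}`. -/
theorem stmt7 (l1 l2 L : ℕ) (hl : l2 ≤ l1) (hL : 1 ≤ L) (mu : ℕ → ℕ)
    (hmu : ∀ i, L ≤ i → mu i = 0) (hsum : l1 + l2 = ∑ j ∈ Finset.range L, mu j) :
    kostka (twoRow l1 l2) mu =
      Nat.card {S : SkewTab (starLo l1 (L - 1)) (starLen l1 l2 (fun i => ∑ w ∈ Finset.Ico (i + 1) L, mu w) (L - 1)) //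
        IsLattice (readWord (starLo l1 (L - 1)) (starLen l1 l2 (fun i => ∑ w ∈ Finset.Ico (i + 1) L, mu w) (L - 1)) (L + 1) S) ∧
        ∀ v, skewContent (starLo l1 (L - 1)) (starLen l1 l2 (fun i => ∑ w ∈ Finset.Ico (i + 1) L, mu w) (L - 1)) (L + 1) S v =
          ∑ w ∈ Finset.Ico v L, mu w} := by
  
  have haf : (fun i => ∑ w ∈ Finset.Ico (i + 1) L, mu w) = aF L mu := rfl
  rw [haf]
  unfold kostka
  apply Nat.card_congr
  refine { toFun := fun T => ⟨fwd hl T.1, fwd_lattice hl hL hmu T.1 T.2,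
             fun v => fwd_content hl hL hmu T.1 T.2 v⟩,
           invFun := fun S => ⟨bwd hl S.1, fun v => bwd_content hl hL hmu S.1 S.2.1 S.2.2 v⟩,
           left_inv := ?_, right_inv := ?_ }
  · rintro ⟨T, hT⟩
    apply Subtype.ext
    apply SemistandardYoungTableau.ext
    intro r j
    show (bwd hl (fwd hl T)) r j = T r j
    rw [bwd_apply]
    by_cases h0 : r = 0
    · subst h0
      rw [if_pos rfl]
      show (fwd (L := L) (mu := mu) hl T).entry (L - 1) j = T 0 j
      simp only [fwd, if_neg (lt_irrefl (L - 1))]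
      rw [show L - 1 - (L - 1) = 0 by omega]
    · by_cases h1 : r = 1
      · subst h1
        rw [if_neg one_ne_zero, if_pos rfl]
        show (fwd (L := L) (mu := mu) hl T).entry ((L - 1) + 1) j = T 1 j
        simp only [fwd, if_neg (show ¬ (L - 1) + 1 < L - 1 by omega)]
        rw [show (L - 1) + 1 - (L - 1) = 1 by omega]
      · rw [if_neg h0, if_neg h1]
        refine (T.zeros ?_).symm
        rw [mem_twoRow hl]
        omega
  · rintro ⟨S, hS⟩
    apply Subtype.ext
    apply skewtab_ext
    funext i j
    show (fwd hl (bwd hl S)).entry i j = S.entry i j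
    by_cases hi : i < L - 1
    · simp only [fwd, if_pos hi]
      by_cases hj : l1 ≤ j ∧ j < l1 + aF L mu i
      · rw [if_pos hj]
        exact (bwd_const hL S hS.1 i hi j hj.1 hj.2).symm
      · rw [if_neg hj]
        refine (S.zeros i j ?_).symm
        simp only [starLo, starLen, if_pos hi]
        exact hj
    · simp only [fwd, if_neg hi]
      rw [bwd_apply]
      by_cases h0 : i = L - 1
      · rw [show i - (L - 1) = 0 by omega, if_pos rfl, h0]
      · by_cases h1 : i = (L - 1) + 1
        · rw [show i - (L - 1) = 1 by omega, if_neg one_ne_zero, if_pos rfl, h1]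
        · rw [if_neg (show i - (L - 1) ≠ 0 by omega), if_neg (show i - (L - 1) ≠ 1 by omega)]
          refine (S.zeros i j ?_).symm
          simp only [starLo, starLen, if_neg hi, if_neg h0, if_neg h1]
          omega
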